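/- arXiv:1611.06703 — 4 statements merged into one kernel-verified Lean document; each statement's English description precedes it below -/
import Mathlib

section
/- Let G = (N, Σ, R, S) be a linear context-free grammar and graph(G) its associated labeled graph. Then: (1) for every accepting path P of graph(G), the word west(P)·east(P) belongs to L(G); and (2) for every word w ∈ L(G), there exists an accepting path P of graph(G) such that w = west(P)·east(P). -/
/-- Whether a symbol is a nonterminal. -/
def Symbol.isNT {T N : Type} : Symbol T N → Bool
  | Symbol.nonterminal _ => true
  | Symbol.terminal _ => false

/-- A context-free grammar is linear if every right-hand side contains
at most one occurrence of a nonterminal. -/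
def IsLinear {T : Type} (G : ContextFreeGrammar.{0} T) : Prop :=
  ∀ r ∈ G.rules, r.output.countP Symbol.isNT ≤ 1

/-- Paths in the labeled graph `graph(G)`.  Vertices are `Option G.NT`, where `some A` is the
nonterminal `A` and `none` is the sink `⊥`.  `GPath G v rs ws es z` means that the sequence of
rules `rs` labels a path from vertex `v` to vertex `z`, with `west(P) = ws` and `east(P) = es`:
an edge `(A, r, B)` exists iff `r : A → u B v` with `u, v ∈ Σ*` (contributing `u` to the west
word and `v` to the east word), and an edge `(A, r, ⊥)` exists iff `r : A → u` with `u ∈ Σ*`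
(contributing `u` to the west word and `ε` to the east word); `west(P)` concatenates left to
right along the path, `east(P)` concatenates right to left. -/
inductive GPath {T : Type} (G : ContextFreeGrammar.{0} T) :
    Option G.NT → List (ContextFreeRule T G.NT) → List T → List T → Option G.NT → Prop
  | nil (v : Option G.NT) : GPath G v [] [] [] v
  | cons_nt {A B : G.NT} {u v : List T} {rs ws es} {z : Option G.NT}
      (r : ContextFreeRule T G.NT) :
      r ∈ G.rules → r.input = A →
      r.output = u.map Symbol.terminal ++ [Symbol.nonterminal B] ++ v.map Symbol.terminal →
      GPath G (some B) rs ws es z →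
      GPath G (some A) (r :: rs) (u ++ ws) (es ++ v) z
  | cons_bot {A : G.NT} {u : List T} {rs ws es} {z : Option G.NT}
      (r : ContextFreeRule T G.NT) :
      r ∈ G.rules → r.input = A →
      r.output = u.map Symbol.terminal →
      GPath G none rs ws es z →
      GPath G (some A) (r :: rs) (u ++ ws) es z

section Aux
variable {T : Type} {G : ContextFreeGrammar.{0} T}

lemma terminal_injective {N : Type} :
    Function.Injective (Symbol.terminal : T → Symbol T N) :=
  fun _ _ hab => by injection hab

lemma gpath_none {rs ws es} {z : Option G.NT}
    (h : GPath G none rs ws es z) : rs = [] ∧ ws = [] ∧ es = [] ∧ z = none := by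
  cases h; exact ⟨rfl, rfl, rfl, rfl⟩

lemma gpath_derives' {v : Option G.NT} {rs ws es} {z : Option G.NT}
    (h : GPath G v rs ws es z) (hz : z = none) :
    G.Derives (match v with | some A => [Symbol.nonterminal A] | none => [])
      ((ws ++ es).map Symbol.terminal) := by
  induction h with
  | nil v =>
    subst hz
    exact ContextFreeGrammar.Derives.refl []
  | cons_nt r hr hin hout htail ih =>
    rename_i A B u v rs ws es z
    have h1 : G.Produces [Symbol.nonterminal A]
        (u.map Symbol.terminal ++ [Symbol.nonterminal B] ++ v.map Symbol.terminal) := by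
      refine ⟨r, hr, ?_⟩
      rw [← hout, ← hin]
      exact ContextFreeRule.Rewrites.input_output
    have h2 := ((ih hz).append_left (u.map Symbol.terminal)).append_right
        (v.map Symbol.terminal)
    refine h1.trans_derives ?_
    have heq : ((u ++ ws ++ (es ++ v)).map (Symbol.terminal : T → Symbol T G.NT))
        = u.map Symbol.terminal ++ ((ws ++ es).map Symbol.terminal)
          ++ v.map Symbol.terminal := by simp
    rw [heq]
    simpa using h2
  | cons_bot r hr hin hout htail ih =>
    obtain ⟨rfl, rfl, rfl, -⟩ := gpath_none htail
    simp only [List.append_nil]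
    refine ContextFreeGrammar.Produces.single ⟨r, hr, ?_⟩
    rw [← hin, ← hout]
    exact ContextFreeRule.Rewrites.input_output

lemma gpath_derives {A : G.NT} {rs ws es}
    (h : GPath G (some A) rs ws es none) :
    G.Derives [Symbol.nonterminal A] ((ws ++ es).map Symbol.terminal) :=
  gpath_derives' h rfl

lemma uniq_decomp {N : Type} (p : List T) (p' q' : List (Symbol T N)) (A X : N) (q : List T)
    (h : p.map Symbol.terminal ++ [Symbol.nonterminal A] ++ q.map Symbol.terminal
        = p' ++ [Symbol.nonterminal X] ++ q') :
    p' = p.map Symbol.terminal ∧ A = X ∧ q' = q.map Symbol.terminal := by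
  induction p generalizing p' with
  | nil =>
    cases p' with
    | nil =>
      simp only [List.map_nil, List.nil_append, List.cons_append] at h
      have h1 := (List.cons.inj h).1
      exact ⟨by simp, by injection h1, ((List.cons.inj h).2).symm⟩
    | cons y p'' =>
      simp only [List.map_nil, List.nil_append, List.cons_append] at h
      have h2 := (List.cons.inj h).2
      exfalso
      have : Symbol.nonterminal X ∈ (q.map Symbol.terminal : List (Symbol T N)) := by
        rw [h2]; simp
      simp at this
  | cons a p ih =>
    cases p' with
    | nil =>
      simp only [List.map_cons, List.cons_append, List.nil_append] at h
      exact absurd (List.cons.inj h).1 (by simp)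
    | cons y p'' =>
      simp only [List.map_cons, List.cons_append] at h
      have h1 := (List.cons.inj h).1
      obtain ⟨h3, h4, h5⟩ := ih p'' (List.cons.inj h).2
      exact ⟨by simp [h1.symm, h3], h4, h5⟩

lemma all_terminals {N : Type} (l : List (Symbol T N))
    (h : ∀ x ∈ l, Symbol.isNT x = false) : ∃ u : List T, l = u.map Symbol.terminal := by
  induction l with
  | nil => exact ⟨[], rfl⟩
  | cons x l ih =>
    cases x with
    | terminal a =>
      obtain ⟨u, rfl⟩ := ih (fun x hx => h x (List.mem_cons_of_mem _ hx))
      exact ⟨a :: u, rfl⟩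
    | nonterminal B =>
      have := h _ List.mem_cons_self
      simp [Symbol.isNT] at this

lemma linear_output_decomp {N : Type} (l : List (Symbol T N))
    (h : l.countP Symbol.isNT ≤ 1) :
    (∃ u : List T, l = u.map Symbol.terminal) ∨
    (∃ (u : List T) (B : N) (v : List T),
      l = u.map Symbol.terminal ++ [Symbol.nonterminal B] ++ v.map Symbol.terminal) := by
  induction l with
  | nil => exact Or.inl ⟨[], rfl⟩
  | cons x l ih =>
    rw [List.countP_cons] at h
    cases x with
    | terminal a =>
      have hx : Symbol.isNT (Symbol.terminal a : Symbol T N) = false := rfl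
      rw [hx, if_neg (by simp)] at h
      rcases ih (by omega) with ⟨u, rfl⟩ | ⟨u, B, v, rfl⟩
      · exact Or.inl ⟨a :: u, rfl⟩
      · exact Or.inr ⟨a :: u, B, v, rfl⟩
    | nonterminal B =>
      have hx : Symbol.isNT (Symbol.nonterminal B : Symbol T N) = true := rfl
      rw [hx, if_pos rfl] at h
      have h0 : l.countP Symbol.isNT = 0 := by omega
      obtain ⟨u, rfl⟩ := all_terminals l
        (fun x hx => by simpa using List.countP_eq_zero.mp h0 x hx)
      exact Or.inr ⟨[], B, u, rfl⟩

lemma derives_terminal_eq {u : List T} {s : List (Symbol T G.NT)}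
    (h : G.Derives (u.map Symbol.terminal) s) : s = u.map Symbol.terminal := by
  rcases h.eq_or_head with heq | ⟨v, ⟨r, hr, hrw⟩, -⟩
  · exact heq.symm
  · obtain ⟨p, q, hpq, -⟩ := hrw.exists_parts
    exfalso
    have : Symbol.nonterminal r.input ∈ (u.map Symbol.terminal : List (Symbol T G.NT)) := by
      rw [hpq]; simp
    simp at this

lemma derives_to_path {G : ContextFreeGrammar.{0} T} (hlin : IsLinear G) {w : List T}
    {s : List (Symbol T G.NT)} (h : G.Derives s (w.map Symbol.terminal)) :
    ∀ (p : List T) (A : G.NT) (q : List T),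
      s = p.map Symbol.terminal ++ [Symbol.nonterminal A] ++ q.map Symbol.terminal →
      ∃ rs ws es, GPath G (some A) rs ws es none ∧ w = p ++ ws ++ es ++ q := by
  induction h using Relation.ReflTransGen.head_induction_on with
  | refl =>
    intro p A q hs
    exfalso
    have : Symbol.nonterminal A ∈ (w.map Symbol.terminal : List (Symbol T G.NT)) := by
      rw [hs]; simp
    simp at this
  | head hstep htail ih =>
    rename_i s₁ s₂
    intro p A q hs
    obtain ⟨r, hr, hrw⟩ := hstep
    obtain ⟨p', q', hpq, hs'⟩ := hrw.exists_parts
    rw [hs] at hpq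
    obtain ⟨rfl, hAX, rfl⟩ := uniq_decomp p p' q' A r.input q hpq
    rcases linear_output_decomp r.output (hlin r hr) with ⟨u, hout⟩ | ⟨u, B, v, hout⟩
    · have hs'' : s₂ = (p ++ u ++ q).map Symbol.terminal := by
        rw [hs', hout]; simp
      have hmap := derives_terminal_eq (hs'' ▸ htail)
      have hw : w = p ++ u ++ q := List.map_injective_iff.mpr terminal_injective hmap
      refine ⟨[r], u ++ [], [], ?_, by simp [hw]⟩
      exact GPath.cons_bot r hr hAX.symm hout (GPath.nil none)
    · have hs'' : s₂ = (p ++ u).map Symbol.terminal ++ [Symbol.nonterminal B]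
          ++ (v ++ q).map Symbol.terminal := by
        rw [hs', hout]; simp
      obtain ⟨rs, ws, es, hpath, hw⟩ := ih (p ++ u) B (v ++ q) hs''
      refine ⟨r :: rs, u ++ ws, es ++ v, ?_, by simp [hw]⟩
      exact GPath.cons_nt r hr hAX.symm hout hpath

end Aux

/-- For a linear context-free grammar `G`: (1) every accepting path `P` of `graph(G)`
(from `S` to `⊥`) yields a word `west(P) ++ east(P)` of `L(G)`; and (2) every word of `L(G)`
is `west(P) ++ east(P)` for some accepting path `P` of `graph(G)`. -/
theorem accepting_paths_correspond_to_words (T : Type) (G : ContextFreeGrammar.{0} T)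
    (hlin : IsLinear G) :
    (∀ (rs : List (ContextFreeRule T G.NT)) (ws es : List T),
        GPath G (some G.initial) rs ws es none → ws ++ es ∈ G.language) ∧
    (∀ w ∈ G.language, ∃ (rs : List (ContextFreeRule T G.NT)) (ws es : List T),
        GPath G (some G.initial) rs ws es none ∧ w = ws ++ es) := by
  constructor
  · intro rs ws es h
    exact (ContextFreeGrammar.mem_language_iff G (ws ++ es)).mpr (gpath_derives h)
  · intro w hw
    rw [ContextFreeGrammar.mem_language_iff] at hw
    obtain ⟨rs, ws, es, hpath, hweq⟩ :=
      derives_to_path hlin hw [] G.initial [] (by simp)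
    exact ⟨rs, ws, es, hpath, by simpa using hweq⟩
end

section
/- Let G = (N, Σ, R, S) be a linear context-free grammar, fix a total order on R, and extend it to the order < on paths (shorter paths first, then lexicographic). Then every accepting path P of graph(G) can be decomposed as P = P₁ e₁ P₂ e₂ ⋯ Pₙ eₙ Pₙ₊₁ for some n ≥ 0, where each Pᵢ is a (possibly empty) optimal path, each eᵢ ∈ R is a single edge, and for each i ∈ {1,…,n} the path Pᵢ eᵢ is not optimal. -/
/-- `rs` labels a path from `u` to `v` in `graph(G)`. -/
def IsPath {T : Type} (G : ContextFreeGrammar.{0} T) (u : Option G.NT)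
    (rs : List (ContextFreeRule T G.NT)) (v : Option G.NT) : Prop :=
  ∃ ws es, GPath G u rs ws es v

/-- The order `<` on paths induced by a (strict total) order `rlt` on rules:
shorter paths first, ties broken lexicographically. -/
def PathLT {T N : Type} (rlt : ContextFreeRule T N → ContextFreeRule T N → Prop)
    (p q : List (ContextFreeRule T N)) : Prop :=
  p.length < q.length ∨ (p.length = q.length ∧ List.Lex rlt p q)

/-- A path is optimal if it is the `<`-minimal path between its endpoints. -/
def IsOptimal {T : Type} (G : ContextFreeGrammar.{0} T)
    (rlt : ContextFreeRule T G.NT → ContextFreeRule T G.NT → Prop)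
    (u : Option G.NT) (rs : List (ContextFreeRule T G.NT)) (v : Option G.NT) : Prop :=
  IsPath G u rs v ∧ ∀ qs, IsPath G u qs v → ¬ PathLT rlt qs rs

/-- `Decomp G rlt u rs v` says that the path `rs` from `u` to `v` can be decomposed as
`P₁ e₁ P₂ e₂ ⋯ Pₙ eₙ Pₙ₊₁` (n ≥ 0) where each `Pᵢ` is a (possibly empty) optimal path,
each `eᵢ` is a single edge, and each `Pᵢ eᵢ` (1 ≤ i ≤ n) is not optimal. -/
inductive Decomp {T : Type} (G : ContextFreeGrammar.{0} T)
    (rlt : ContextFreeRule T G.NT → ContextFreeRule T G.NT → Prop) :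
    Option G.NT → List (ContextFreeRule T G.NT) → Option G.NT → Prop
  | last {u : Option G.NT} {rs} {v : Option G.NT} :
      IsOptimal G rlt u rs v → Decomp G rlt u rs v
  | step {u m m' v : Option G.NT} {P rest} (e : ContextFreeRule T G.NT) :
      IsOptimal G rlt u P m →
      IsPath G m [e] m' →
      ¬ IsOptimal G rlt u (P ++ [e]) m' →
      Decomp G rlt m' rest v →
      Decomp G rlt u (P ++ e :: rest) v

section Aux

variable {T : Type} {G : ContextFreeGrammar.{0} T}

lemma filter_isNT_map_terminal {N : Type} (u : List T) :
    (List.map (Symbol.terminal : T → Symbol T N) u).filter Symbol.isNT = [] := by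
  induction u with
  | nil => rfl
  | cons a l ih => simpa [Symbol.isNT] using ih

lemma gpath_endpoint_unique {a : Option G.NT} {rs ws es ws' es' z z'} :
    GPath G a rs ws es z → GPath G a rs ws' es' z' → z = z' := by
  intro h1
  induction h1 generalizing ws' es' z' with
  | nil v => intro h2; cases h2; rfl
  | cons_nt r hr hin hout h ih =>
    intro h2
    cases h2 with
    | cons_nt r hr' hin' hout' h' =>
      have := hout.symm.trans hout'
      have h3 := congrArg (List.filter Symbol.isNT) this
      simp [filter_isNT_map_terminal, Symbol.isNT, List.filter_cons] at h3
      subst h3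
      exact ih h'
    | cons_bot r hr' hin' hout' h' =>
      have := hout.symm.trans hout'
      have h3 := congrArg (List.filter Symbol.isNT) this
      simp [filter_isNT_map_terminal, Symbol.isNT] at h3
  | cons_bot r hr hin hout h ih =>
    intro h2
    cases h2 with
    | cons_nt r hr' hin' hout' h' =>
      have := hout.symm.trans hout'
      have h3 := congrArg (List.filter Symbol.isNT) this
      simp [filter_isNT_map_terminal, Symbol.isNT] at h3
    | cons_bot r hr' hin' hout' h' =>
      exact ih h'

lemma gpath_split {a : Option G.NT} {rs ws es z} (h : GPath G a rs ws es z) :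
    ∀ p q, rs = p ++ q → ∃ m, IsPath G a p m ∧ IsPath G m q z := by
  induction h with
  | nil v =>
    intro p q hpq
    obtain ⟨hp, hq⟩ := List.append_eq_nil_iff.mp hpq.symm
    subst hp; subst hq
    exact ⟨v, ⟨_, _, GPath.nil v⟩, ⟨_, _, GPath.nil v⟩⟩
  | cons_nt r hr hin hout h ih =>
    intro p q hpq
    cases p with
    | nil =>
      simp only [List.nil_append] at hpq
      subst hpq
      exact ⟨_, ⟨[], [], GPath.nil _⟩, ⟨_, _, GPath.cons_nt r hr hin hout h⟩⟩
    | cons p0 p' =>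
      simp only [List.cons_append, List.cons.injEq] at hpq
      obtain ⟨hp0, hrest⟩ := hpq
      obtain ⟨m, ⟨w1, e1, hp⟩, hq⟩ := ih p' q hrest
      subst hp0
      exact ⟨m, ⟨_, _, GPath.cons_nt r hr hin hout hp⟩, hq⟩
  | cons_bot r hr hin hout h ih =>
    intro p q hpq
    cases p with
    | nil =>
      simp only [List.nil_append] at hpq
      subst hpq
      exact ⟨_, ⟨[], [], GPath.nil _⟩, ⟨_, _, GPath.cons_bot r hr hin hout h⟩⟩
    | cons p0 p' =>
      simp only [List.cons_append, List.cons.injEq] at hpq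
      obtain ⟨hp0, hrest⟩ := hpq
      obtain ⟨m, ⟨w1, e1, hp⟩, hq⟩ := ih p' q hrest
      subst hp0
      exact ⟨m, ⟨_, _, GPath.cons_bot r hr hin hout hp⟩, hq⟩

lemma ispath_endpoint_unique {a : Option G.NT} {rs z z'} :
    IsPath G a rs z → IsPath G a rs z' → z = z' := by
  rintro ⟨_, _, h1⟩ ⟨_, _, h2⟩
  exact gpath_endpoint_unique h1 h2

lemma isOptimal_nil (rlt : ContextFreeRule T G.NT → ContextFreeRule T G.NT → Prop)
    (u : Option G.NT) : IsOptimal G rlt u [] u := by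
  refine ⟨⟨_, _, GPath.nil u⟩, ?_⟩
  rintro qs _ (h | ⟨h, hlex⟩)
  · simp at h
  · rw [List.length_eq_zero_iff.mp h] at hlex
    cases hlex

lemma decomp_aux (rlt : ContextFreeRule T G.NT → ContextFreeRule T G.NT → Prop) :
    ∀ (n : ℕ) (rs : List (ContextFreeRule T G.NT)) (u v : Option G.NT),
      rs.length ≤ n → IsPath G u rs v → Decomp G rlt u rs v := by
  intro n
  induction n with
  | zero =>
    intro rs u v hlen hpath
    rw [List.length_eq_zero_iff.mp (Nat.le_zero.mp hlen)] at hpath ⊢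
    have : u = v := ispath_endpoint_unique ⟨_, _, GPath.nil u⟩ hpath
    subst this
    exact Decomp.last (isOptimal_nil rlt u)
  | succ n ih =>
    intro rs u v hlen hpath
    classical
    set P : ℕ → Prop := fun k => ∃ z, IsOptimal G rlt u (rs.take k) z with hP
    have hP0 : P 0 := ⟨u, by simpa using isOptimal_nil rlt u⟩
    set k := Nat.findGreatest P rs.length with hk
    have hkle : k ≤ rs.length := Nat.findGreatest_le _
    have hPk : P k := Nat.findGreatest_spec (Nat.zero_le _) hP0
    obtain ⟨z, hopt⟩ := hPk
    rcases Nat.lt_or_ge k rs.length with hlt | hge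
    · -- k < rs.length: split rs = take k ++ rs[k] :: drop (k+1)
      have hdrop : rs.drop k = rs[k] :: rs.drop (k + 1) :=
        List.drop_eq_getElem_cons hlt
      obtain ⟨ws0, es0, hg0⟩ := hpath
      obtain ⟨m, hp1, hp2⟩ := gpath_split hg0 (rs.take k) (rs.drop k)
        (List.take_append_drop k rs).symm
      rw [hdrop] at hp2
      obtain ⟨ws1, es1, hg1⟩ := hp2
      obtain ⟨m', he, hp3⟩ := gpath_split hg1 [rs[k]] (rs.drop (k + 1)) rfl
      have hzm : z = m := ispath_endpoint_unique hopt.1 hp1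
      subst hzm
      have hnotopt : ¬ IsOptimal G rlt u (rs.take k ++ [rs[k]]) m' := by
        intro hcontra
        have hgt : ¬ P (k + 1) :=
          Nat.findGreatest_is_greatest (Nat.lt_succ_self k) hlt
        apply hgt
        refine ⟨m', ?_⟩
        rwa [List.take_succ, List.getElem?_eq_getElem hlt, Option.toList_some]
      have hrest : Decomp G rlt m' (rs.drop (k + 1)) v := by
        apply ih _ _ _ _ hp3
        have : (rs.drop (k + 1)).length = rs.length - (k + 1) := List.length_drop
        omega
      have := Decomp.step (G := G) (rlt := rlt) rs[k] hopt he hnotopt hrest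
      rwa [← hdrop, List.take_append_drop] at this
    · -- k = rs.length : rs itself is optimal
      have hkeq : k = rs.length := le_antisymm hkle hge
      rw [hkeq, List.take_length] at hopt
      have : z = v := ispath_endpoint_unique hopt.1 hpath
      subst this
      exact Decomp.last hopt

end Aux

/-- Every accepting path of `graph(G)` (for a linear grammar `G`, with any total order on the
rules) decomposes as `P₁ e₁ P₂ e₂ ⋯ Pₙ eₙ Pₙ₊₁` with each `Pᵢ` optimal and each `Pᵢ eᵢ`
not optimal. -/
theorem accepting_path_decomposition (T : Type) (G : ContextFreeGrammar.{0} T)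
    (hlin : IsLinear G)
    (rlt : ContextFreeRule T G.NT → ContextFreeRule T G.NT → Prop)
    (hto : IsStrictTotalOrder (ContextFreeRule T G.NT) rlt) :
    ∀ (rs : List (ContextFreeRule T G.NT)) (ws es : List T),
      GPath G (some G.initial) rs ws es none →
      Decomp G rlt (some G.initial) rs none := by
  intro rs ws es h
  exact decomp_aux rlt rs.length rs _ _ le_rfl ⟨ws, es, h⟩
end

section
/- Let G = (N, Σ, R, S) be a context-free grammar and Lin(G) the linear context-free grammar obtained from G by the linearization construction (for any choice of the witness words x_A). Then L(Lin(G)) ⊆ L(G), i.e., every word generated by Lin(G) is generated by G. -/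
/-- A nonterminal `A` is productive if it derives at least one terminal word. -/
def Productive {T : Type} (G : ContextFreeGrammar.{0} T) (A : G.NT) : Prop :=
  ∃ w : List T, G.Derives [Symbol.nonterminal A] (w.map Symbol.terminal)

/-- Substitute a nonterminal symbol by (the terminal word given by) its witness word `x A`,
leaving terminal symbols unchanged. -/
def substWitness {T N : Type} (x : N → List T) : Symbol T N → List (Symbol T N)
  | Symbol.terminal t => [Symbol.terminal t]
  | Symbol.nonterminal A => (x A).map Symbol.terminal

/-- `LinRuleOf x r r'` : the rule `r'` is one of the rules obtained from
`r : A → x₀ A₁ x₁ ⋯ Aₙ xₙ` in the linearization construction, i.e. either `r` has no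
nonterminal in its right-hand side and `r' = r`, or `r'` is obtained from `r` by keeping one
occurrence of a nonterminal `B` and replacing every other nonterminal `A` by its witness
word `x A`. -/
def LinRuleOf {T N : Type} (x : N → List T) (r r' : ContextFreeRule T N) : Prop :=
  r'.input = r.input ∧
  ((∃ u : List T, r.output = u.map Symbol.terminal ∧ r'.output = r.output) ∨
   ∃ (l rt : List (Symbol T N)) (B : N),
     r.output = l ++ Symbol.nonterminal B :: rt ∧
     r'.output = l.flatMap (substWitness x) ++ Symbol.nonterminal B :: rt.flatMap (substWitness x))

/-- `IsLinearization G x R'` : `R'` is the rule set of `Lin(G)`, the linearization of `G`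
obtained by choosing, for each productive nonterminal `A`, a witness word `x A` produced
by `A`: a rule is in `R'` iff it is obtained from some rule of `G` all of whose right-hand-side
nonterminals are productive, by keeping one nonterminal occurrence and replacing the others by
their witness words (rules with terminal-only right-hand sides are kept as is). -/
def IsLinearization {T : Type} (G : ContextFreeGrammar.{0} T) (x : G.NT → List T)
    (R' : Finset (ContextFreeRule T G.NT)) : Prop :=
  (∀ A : G.NT, Productive G A → G.Derives [Symbol.nonterminal A] ((x A).map Symbol.terminal)) ∧
  ∀ r' : ContextFreeRule T G.NT, r' ∈ R' ↔
    ∃ r ∈ G.rules,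
      (∀ A : G.NT, Symbol.nonterminal A ∈ r.output → Productive G A) ∧ LinRuleOf x r r'

/-- Every word generated by the linearization `Lin(G)` (for any choice of witness words)
is generated by `G`: `L(Lin(G)) ⊆ L(G)`. -/
theorem lin_language_subset (T : Type) (G : ContextFreeGrammar.{0} T) (x : G.NT → List T)
    (R' : Finset (ContextFreeRule T G.NT)) (hR' : IsLinearization G x R') :
    ∀ w ∈ (ContextFreeGrammar.mk G.NT G.initial R').language, w ∈ G.language := by
  obtain ⟨hx, hiff⟩ := hR'
  -- Lemma 1: derive any list to its witness substitution
  have key : ∀ l : List (Symbol T G.NT),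
      (∀ A : G.NT, Symbol.nonterminal A ∈ l → Productive G A) →
      G.Derives l (l.flatMap (substWitness x)) := by
    intro l
    induction l with
    | nil => intro _; simp [ContextFreeGrammar.Derives.refl]
    | cons s tl ih =>
      intro h
      have htl := ih (fun A hA => h A (List.mem_cons_of_mem _ hA))
      have hs : G.Derives [s] (substWitness x s) := by
        cases s with
        | terminal t => simpa [substWitness] using ContextFreeGrammar.Derives.refl [Symbol.terminal t]
        | nonterminal A => exact hx A (h A (by simp))
      have := (hs.append_right tl).trans (htl.append_left (substWitness x s))
      simpa using this
  -- Lemma 2: each lin rule is simulated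
  have sim : ∀ r' ∈ R', G.Derives [Symbol.nonterminal r'.input] r'.output := by
    intro r' hr'
    obtain ⟨r, hrG, hprod, hin, hcase⟩ := (hiff r').mp hr'
    have step : G.Derives [Symbol.nonterminal r'.input] r.output := by
      rw [hin]
      exact ContextFreeGrammar.Produces.single ⟨r, hrG, ContextFreeRule.Rewrites.input_output⟩
    rcases hcase with ⟨u, _, hout⟩ | ⟨l, rt, B, hro, hout⟩
    · rwa [hout]
    · rw [hout]
      refine step.trans ?_
      rw [hro]
      have hl : G.Derives l (l.flatMap (substWitness x)) :=
        key l (fun A hA => hprod A (by rw [hro]; exact List.mem_append_left _ hA))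
      have hrt : G.Derives rt (rt.flatMap (substWitness x)) :=
        key rt (fun A hA => hprod A (by rw [hro]; exact List.mem_append_right _ (List.mem_cons_of_mem _ hA)))
      have h2 := hrt.append_left (l.flatMap (substWitness x) ++ [Symbol.nonterminal B])
      have := (hl.append_right (Symbol.nonterminal B :: rt)).trans (by simpa using h2)
      simpa using this
  -- Lemma 3: each lin derivation is simulated
  have simD : ∀ u v : List (Symbol T G.NT),
      (ContextFreeGrammar.mk G.NT G.initial R').Derives u v → G.Derives u v := by
    intro u v h
    induction h with
    | refl => exact ContextFreeGrammar.Derives.refl _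
    | tail _ hp ih =>
      obtain ⟨r', hr', hrw⟩ := hp
      rw [ContextFreeRule.rewrites_iff] at hrw
      obtain ⟨p, q, hu, hv⟩ := hrw
      refine ih.trans ?_
      rw [hu, hv]
      simpa using ((sim r' hr').append_right q).append_left p
  intro w hw
  exact simD _ _ hw
end

section
/- Let G = (N, Σ, R, S) be a context-free grammar and Lin(G) a linearization of G. Then the number of production rules of Lin(G) is at most |G| = ∑_{(A → rhs) ∈ R} (|rhs| + 1). (Each rule A → rhs of G is duplicated at most |rhs| times in the construction of Lin(G).) -/
noncomputable def linAt {T N : Type} (x : N → List T)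
    (p : (_ : ContextFreeRule T N) × ℕ) : ContextFreeRule T N :=
  match p.1.output[p.2]? with
  | some (Symbol.nonterminal B) =>
      ⟨p.1.input, (p.1.output.take p.2).flatMap (substWitness x) ++
        Symbol.nonterminal B :: (p.1.output.drop (p.2 + 1)).flatMap (substWitness x)⟩
  | _ => p.1

/-- The number of production rules of a linearization `Lin(G)` of `G` is at most
`|G| = ∑_{(A → rhs) ∈ R} (|rhs| + 1)`, the size of `G`. -/
theorem lin_rules_card_le_size (T : Type) (G : ContextFreeGrammar.{0} T) (x : G.NT → List T)
    (R' : Finset (ContextFreeRule T G.NT)) (hR' : IsLinearization G x R') :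
    R'.card ≤ ∑ r ∈ G.rules, (r.output.length + 1) := by
  classical
  have hsub : R' ⊆ (G.rules.sigma fun r => Finset.range (r.output.length + 1)).image
      (linAt x) := by
    intro r' hr'
    obtain ⟨r, hrG, -, hin, hcase⟩ := (hR'.2 r').mp hr'
    rw [Finset.mem_image]
    rcases hcase with ⟨u, hu, hout⟩ | ⟨l, rt, B, hro, hout⟩
    · refine ⟨⟨r, r.output.length⟩, ?_, ?_⟩
      · simp [Finset.mem_sigma, hrG]
      · have : r.output[r.output.length]? = none := by simp
        rw [linAt, this]
        ext <;> simp [hin, hout]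
    · refine ⟨⟨r, l.length⟩, ?_, ?_⟩
      · simp [Finset.mem_sigma, hrG, hro]
      · have hget : r.output[l.length]? = some (Symbol.nonterminal B) := by
          simp [hro, List.getElem_append_right]
        have htake : r.output.take l.length = l := by
          simp [hro, List.take_left]
        have hdrop : r.output.drop (l.length + 1) = rt := by
          rw [hro, List.drop_append]
          simp
        rw [linAt, hget, htake, hdrop]
        ext <;> simp [hin, hout]
  calc R'.card ≤ _ := Finset.card_le_card hsub
    _ ≤ (G.rules.sigma fun r => Finset.range (r.output.length + 1)).card :=
        Finset.card_image_le
    _ = ∑ r ∈ G.rules, (r.output.length + 1) := by simp [Finset.card_sigma]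
end
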